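/- arXiv:2112.04448 — 7 statements merged into one kernel-verified Lean document; each statement's English description precedes it below -/
import Mathlib

section
/- The number of dominating sets of any finite simple graph is odd. -/
open SimpleGraph Finset
open scoped symmDiff

variable {V : Type*}

/-- `D` is a dominating set of `G`: every vertex outside `D` has a neighbor in `D`. -/
def IsDomSet [DecidableEq V] (G : SimpleGraph V) (D : Finset V) : Prop :=
  ∀ z : V, z ∉ D → ∃ y ∈ D, G.Adj y z

/-- The dominating graph of `G`: vertices are the dominating sets of `G`, two of them
adjacent iff their symmetric difference is a singleton. -/
def DomGraph [DecidableEq V] (G : SimpleGraph V) :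
    SimpleGraph {D : Finset V // IsDomSet G D} where
  Adj X Y := (X.1 ∆ Y.1).card = 1
  symm := ⟨fun X Y h => by simpa [symmDiff_comm] using h⟩
  loopless := ⟨fun X h => by simp [symmDiff_self] at h⟩

/-- A graph has a Hamilton path iff some walk visits every vertex exactly once. -/
def HasHamiltonPath {α : Type*} [DecidableEq α] (G : SimpleGraph α) : Prop :=
  ∃ (a b : α) (p : G.Walk a b), p.IsHamiltonian

theorem number_of_dominating_sets_odd [Fintype V] [DecidableEq V] (G : SimpleGraph V) :
    Odd (Nat.card {D : Finset V // IsDomSet G D}) := by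
  classical
  -- `F A` is the set of vertices not dominated by `A`.
  set F : Finset V → Finset V := fun A =>
    univ.filter (fun v => v ∉ A ∧ ∀ a ∈ A, ¬ G.Adj a v) with hF
  have hFmem : ∀ (A : Finset V) (v : V), v ∈ F A ↔ (v ∉ A ∧ ∀ a ∈ A, ¬ G.Adj a v) := by
    intro A v; simp [hF]
  have hsub_symm : ∀ A B : Finset V, B ⊆ F A → A ⊆ F B := by
    intro A B h a ha
    rw [hFmem]
    refine ⟨fun haB => ((hFmem A a).1 (h haB)).1 ha, fun b hb hadj => ?_⟩
    exact ((hFmem A b).1 (h hb)).2 a ha hadj.symm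
  -- the set of "good pairs"
  set S : Finset ((_ : Finset V) × Finset V) :=
    univ.sigma (fun A => (F A).powerset) with hS
  have hSmem : ∀ p : (_ : Finset V) × Finset V, p ∈ S ↔ p.2 ⊆ F p.1 := by
    intro p; simp [hS]
  have h00 : (⟨∅, ∅⟩ : (_ : Finset V) × Finset V) ∈ S := by
    rw [hSmem]; exact empty_subset _
  -- Step 1: the cardinality of `S` is odd (swap involution).
  have hodd : (S.card : ZMod 2) = 1 := by
    have hc : S.card = (S.erase ⟨∅, ∅⟩).card + 1 := by
      rw [card_erase_of_mem h00]
      have : 0 < S.card := card_pos.2 ⟨_, h00⟩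
      omega
    have hzero : ((S.erase ⟨∅, ∅⟩).card : ZMod 2) = 0 := by
      rw [card_eq_sum_ones, Nat.cast_sum]
      refine Finset.sum_involution (fun p _ => ⟨p.2, p.1⟩) ?_ ?_ ?_ ?_
      · intro a ha; decide
      · intro p hp _ hEq
        -- swap p = p forces p = (∅, ∅), contradiction
        obtain ⟨A, B⟩ := p
        have h1 : B = A := congrArg Sigma.fst hEq
        subst h1
        have hBS : (⟨B, B⟩ : (_ : Finset V) × Finset V) ∈ S := mem_of_mem_erase hp
        have hBB : B ⊆ F B := (hSmem _).1 hBS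
        have hBempty : B = ∅ := by
          by_contra hne
          obtain ⟨b, hb⟩ := nonempty_iff_ne_empty.2 hne
          exact ((hFmem B b).1 (hBB hb)).1 hb
        subst hBempty
        exact (mem_erase.1 hp).1 rfl
      · intro p hp
        obtain ⟨A, B⟩ := p
        have hps : (⟨A, B⟩ : (_ : Finset V) × Finset V) ∈ S := mem_of_mem_erase hp
        refine mem_erase.2 ⟨?_, ?_⟩
        · intro hEq
          have h1 : B = ∅ := congrArg Sigma.fst hEq
          subst h1
          have h2 : A = ∅ := by
            have := congrArg (fun q : (_ : Finset V) × Finset V => q.2) hEq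
            simpa using this
          subst h2
          exact (mem_erase.1 hp).1 rfl
        · rw [hSmem]
          exact hsub_symm A B ((hSmem _).1 hps)
      · intro p hp; rfl
    rw [hc]
    push_cast
    rw [hzero]
    simp
  -- Step 2: compute the cardinality of `S` as a sum.
  have hcardS : S.card = ∑ A : Finset V, 2 ^ (F A).card := by
    rw [hS, card_sigma]
    simp [card_powerset]
  -- Step 3: mod 2, the sum counts dominating sets.
  have hdom : ∀ A : Finset V, F A = ∅ ↔ IsDomSet G A := by
    intro A
    rw [hF]
    simp only [filter_eq_empty_iff, mem_univ, true_implies]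
    constructor
    · intro h z hz
      have := @h z
      push_neg at this
      exact this hz
    · intro h v
      push_neg
      intro hv
      exact h v hv
  have hsum : ((∑ A : Finset V, 2 ^ (F A).card : ℕ) : ZMod 2)
      = ((univ.filter (fun A : Finset V => IsDomSet G A)).card : ZMod 2) := by
    push_cast
    have : ∀ A : Finset V, ((2 : ZMod 2)) ^ (F A).card
        = if IsDomSet G A then 1 else 0 := by
      intro A
      have h2 : (2 : ZMod 2) = 0 := by decide
      rw [h2, zero_pow_eq]
      have hiff : (F A).card = 0 ↔ IsDomSet G A := by
        rw [card_eq_zero]; exact hdom A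
      simp [hiff]
    rw [Finset.sum_congr rfl (fun A _ => this A)]
    rw [Finset.sum_boole]
  -- Step 4: conclude.
  have hfinal : (((univ.filter (fun A : Finset V => IsDomSet G A)).card : ℕ) : ZMod 2) = 1 := by
    rw [← hsum, ← hcardS, hodd]
  have hcard : Nat.card {D : Finset V // IsDomSet G D}
      = (univ.filter (fun A : Finset V => IsDomSet G A)).card := by
    rw [Nat.card_eq_fintype_card]
    convert Fintype.card_subtype (fun A : Finset V => IsDomSet G A)
  rw [hcard, ← ZMod.natCast_eq_one_iff_odd]
  exact hfinal
end

section
/- For any finite simple graph H, the dominating graph D(H) has no Hamilton cycle. -/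
open SimpleGraph Finset
open scoped symmDiff

variable {V : Type*}

lemma card_symmDiff_aux [DecidableEq V] (A B : Finset V) :
    A.card + B.card = (A ∆ B).card + 2 * (A ∩ B).card := by
  have h1 : (A ∆ B) = (A \ B) ∪ (B \ A) := by
    rw [symmDiff_def]; rfl
  have h2 : ((A \ B) ∪ (B \ A)).card = (A \ B).card + (B \ A).card :=
    Finset.card_union_of_disjoint (disjoint_sdiff_sdiff)
  have h3 : (A \ B).card + (A ∩ B).card = A.card := Finset.card_sdiff_add_card_inter A B
  have h4 : (B \ A).card + (B ∩ A).card = B.card := Finset.card_sdiff_add_card_inter B A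
  rw [Finset.inter_comm] at h4
  rw [h1, h2]
  omega

lemma walk_parity [DecidableEq V] (G : SimpleGraph V)
    {X Y : {D : Finset V // IsDomSet G D}} (p : (DomGraph G).Walk X Y) :
    ((X.1.card : ZMod 2) + p.length) = Y.1.card := by
  induction p with
  | nil => simp
  | cons h q ih =>
    rename_i A B C
    have hc : A.1.card + B.1.card = (A.1 ∆ B.1).card + 2 * (A.1 ∩ B.1).card :=
      card_symmDiff_aux _ _
    have h' : (A.1 ∆ B.1).card = 1 := h
    rw [h'] at hc
    have two : (2 : ZMod 2) = 0 := by decide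
    have key : ((A.1.card : ZMod 2) + 1) = B.1.card := by
      have h2 : ((A.1.card + B.1.card : ℕ) : ZMod 2) = ((1 + 2 * (A.1 ∩ B.1).card : ℕ) : ZMod 2) := by rw [hc]
      push_cast at h2
      linear_combination h2 + (1 - (B.1.card : ZMod 2) + ((A.1 ∩ B.1).card : ZMod 2)) * two
    rw [SimpleGraph.Walk.length_cons]
    push_cast
    linear_combination ih + key


lemma two_pow_zmod (k : ℕ) : ((2 ^ k : ℕ) : ZMod 2) = if k = 0 then 1 else 0 := by
  cases k with
  | zero => simp
  | succ n => push_cast [pow_succ]; exact mul_eq_zero_of_right _ (by decide)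

lemma card_domsets_odd [Fintype V] [DecidableEq V] (G : SimpleGraph V)
    [Fintype {D : Finset V // IsDomSet G D}] :
    ((Fintype.card {D : Finset V // IsDomSet G D} : ZMod 2)) = 1 := by
  classical
  set P : Finset V × Finset V → Prop :=
    fun p => ∀ a ∈ p.1, ∀ b ∈ p.2, a ≠ b ∧ ¬ G.Adj a b with hP
  set S : Finset (Finset V × Finset V) := univ.filter P with hS
  have hPsymm : ∀ p, P p → P p.swap := by
    rintro ⟨A, B⟩ h b hb a ha
    exact ⟨(h a ha b hb).1.symm, fun hadj => (h a ha b hb).2 hadj.symm⟩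
  have hdiag : ∀ A : Finset V, P (A, A) → A = ∅ := by
    intro A h
    by_contra hne
    obtain ⟨a, ha⟩ := Finset.nonempty_iff_ne_empty.2 hne
    exact (h a ha a ha).1 rfl
  have hmem : (∅, (∅ : Finset V)) ∈ S := by simp [hS, hP]
  -- parity of S via the swap involution
  have hS' : (((S.erase (∅, ∅)).card : ZMod 2)) = 0 := by
    have : ∑ _p ∈ S.erase (∅, ∅), (1 : ZMod 2) = 0 := by
      refine Finset.sum_involution (fun p _ => p.swap)
        (fun p hp => by decide)
        (fun p hp _ hswap => ?_)
        (fun p hp => ?_)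
        (fun p hp => Prod.swap_swap p)
      · simp only [hS, Finset.mem_erase, Finset.mem_filter] at hp
        have hAB : p.1 = p.2 := by
          have h2 : p.2 = p.1 := by simpa using congrArg Prod.fst hswap
          exact h2.symm
        obtain ⟨p1, p2⟩ := p
        simp only at hAB
        subst hAB
        exact hp.1 (by rw [hdiag p1 hp.2.2])
      · simp only [hS, Finset.mem_erase, Finset.mem_filter] at hp ⊢
        refine ⟨?_, Finset.mem_univ _, hPsymm _ hp.2.2⟩
        intro h
        apply hp.1
        obtain ⟨p1, p2⟩ := p
        simpa [Prod.ext_iff, and_comm] using h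
    simpa using this
  have hScard : ((S.card : ZMod 2)) = 1 := by
    have h1 := Finset.card_erase_add_one hmem
    have h2 : ((S.card : ZMod 2)) = ((S.erase (∅, ∅)).card : ZMod 2) + 1 := by
      rw [← h1]; push_cast; ring
    rw [h2, hS']; ring
  -- count S by fibers
  set T : Finset V → Finset V :=
    fun A => univ.filter (fun b => ∀ a ∈ A, a ≠ b ∧ ¬ G.Adj a b) with hT
  have hfiber : S.card = ∑ A : Finset V, 2 ^ (T A).card := by
    rw [hS, Finset.card_filter, Fintype.sum_prod_type]
    refine Finset.sum_congr rfl (fun A _ => ?_)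
    have heq : ∀ B : Finset V, P (A, B) ↔ B ⊆ T A := by
      intro B
      constructor
      · intro h b hb
        simp only [hT, Finset.mem_filter, Finset.mem_univ, true_and]
        exact fun a ha => h a ha b hb
      · intro h a ha b hb
        have := h hb
        simp only [hT, Finset.mem_filter] at this
        exact this.2 a ha
    calc ∑ B : Finset V, (if P (A, B) then 1 else 0)
        = ∑ B : Finset V, (if B ⊆ T A then 1 else 0) :=
          Finset.sum_congr rfl (fun B _ => by simp [heq B])
      _ = (univ.filter (fun B => B ⊆ T A)).card := (Finset.card_filter _ _).symm
      _ = (T A).powerset.card := by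
          congr 1; ext B; simp [Finset.mem_powerset]
      _ = 2 ^ (T A).card := Finset.card_powerset _
  have hTdom : ∀ A : Finset V, (T A = ∅ ↔ IsDomSet G A) := by
    intro A
    constructor
    · intro he z hz
      by_contra hno
      push_neg at hno
      have : z ∈ T A := by
        simp only [hT, Finset.mem_filter, Finset.mem_univ, true_and]
        intro a ha
        exact ⟨fun h => hz (h ▸ ha), fun h => hno a ha h⟩
      rw [he] at this
      exact absurd this (Finset.notMem_empty z)
    · intro hdom
      rw [Finset.eq_empty_iff_forall_notMem]
      intro b hb
      simp only [hT, Finset.mem_filter, Finset.mem_univ, true_and] at hb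
      by_cases hbA : b ∈ A
      · exact (hb b hbA).1 rfl
      · obtain ⟨y, hy, hadj⟩ := hdom b hbA
        exact (hb y hy).2 hadj
  have hfinal : ((S.card : ZMod 2)) =
      (((univ.filter (fun A : Finset V => IsDomSet G A)).card : ZMod 2)) := by
    rw [hfiber, Finset.card_filter, Nat.cast_sum, Nat.cast_sum]
    refine Finset.sum_congr rfl (fun A _ => ?_)
    rw [two_pow_zmod]
    by_cases h : IsDomSet G A
    · have : (T A).card = 0 := Finset.card_eq_zero.2 ((hTdom A).2 h)
      simp [h, this]
    · have hne : (T A).card ≠ 0 := by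
        rw [Ne, Finset.card_eq_zero]
        exact fun he => h ((hTdom A).1 he)
      simp [h, hne]
  have hcard : Fintype.card {D : Finset V // IsDomSet G D} =
      (univ.filter (fun A : Finset V => IsDomSet G A)).card :=
    Fintype.card_of_subtype _ (fun A => by simp)
  rw [hcard, ← hfinal, hScard]

theorem domGraph_no_hamilton_cycle [Fintype V] [DecidableEq V] (G : SimpleGraph V) :
    ¬ ∃ (X : {D : Finset V // IsDomSet G D}) (p : (DomGraph G).Walk X X),
      p.IsHamiltonianCycle := by
  classical
  rintro ⟨X, p, hp⟩
  have hl := hp.length_eq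
  have hw := walk_parity G p
  have h0 : ((p.length : ZMod 2)) = 0 := by linear_combination hw
  rw [hl, card_domsets_odd G] at h0
  exact one_ne_zero h0
end

section
/- If T is a tree on n ≥ 3 vertices, then either (1) there exist distinct vertices u, v, x of T with N_T(u) = N_T(v) = {x}, or (2) there exist distinct vertices u, v, w of T with N_T(v) = {u, w} and N_T(w) = {v}. -/
open SimpleGraph Finset
open scoped symmDiff

variable {V : Type*}

theorem tree_reduction_lemma [Fintype V] (T : SimpleGraph V) (hT : T.IsTree)
    (hn : 3 ≤ Fintype.card V) :
    (∃ u v x : V, u ≠ v ∧ u ≠ x ∧ v ≠ x ∧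
      T.neighborSet u = {x} ∧ T.neighborSet v = {x}) ∨
    (∃ u v w : V, u ≠ v ∧ u ≠ w ∧ v ≠ w ∧
      T.neighborSet v = {u, w} ∧ T.neighborSet w = {v}) := by
  classical
  have hne : Nonempty V := Fintype.card_pos_iff.mp (by omega)
  -- uniqueness of paths
  have hu : ∀ {a b : V} (q r : T.Walk a b), q.IsPath → r.IsPath → q = r := by
    intro a b q r hq hr
    have := (isAcyclic_iff_path_unique.mp hT.2) ⟨q, hq⟩ ⟨r, hr⟩
    exact Subtype.ext_iff.mp this
  -- any path has length equal to dist
  have plen : ∀ {a b : V} (q : T.Walk a b), q.IsPath → q.length = T.dist a b := by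
    intro a b q hq
    obtain ⟨r, hr, hrl⟩ := hT.1.exists_path_of_dist a b
    rw [← hrl, hu q r hq hr]
  -- maximal distance pair
  obtain ⟨⟨x, y⟩, hmax⟩ := Finite.exists_max (fun p : V × V => T.dist p.1 p.2)
  have hmax' : ∀ a b : V, T.dist a b ≤ T.dist x y := fun a b => hmax (a, b)
  -- the diameter is at least 2
  have h2 : 2 ≤ T.dist x y := by
    by_contra hlt
    push_neg at hlt
    have hadj : ∀ a b : V, a ≠ b → T.Adj a b := by
      intro a b hab
      have ha : 0 < T.dist a b := hT.1.pos_dist_of_ne hab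
      have hb : T.dist a b ≤ T.dist x y := hmax' a b
      have : T.dist a b = 1 := by omega
      exact dist_eq_one_iff_adj.mp this
    obtain ⟨a, b, hab⟩ := Fintype.exists_pair_of_one_lt_card (α := V) (by omega)
    have hcne : (({a, b} : Finset V)ᶜ).Nonempty := by
      rw [← Finset.card_pos, Finset.card_compl]
      have hle : ({a, b} : Finset V).card ≤ 2 :=
        (Finset.card_insert_le _ _).trans (by simp)
      omega
    obtain ⟨c, hc⟩ := hcne
    rw [Finset.mem_compl, Finset.mem_insert, Finset.mem_singleton] at hc
    push_neg at hc
    obtain ⟨hca, hcb⟩ := hc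
    have hp1 : (Walk.cons (hadj a b hab) Walk.nil).IsPath := by
      rw [Walk.cons_isPath_iff]
      simp [hab]
    have hp2 : (Walk.cons (hadj a c (Ne.symm hca)) (Walk.cons (hadj c b hcb) Walk.nil)).IsPath := by
      rw [Walk.cons_isPath_iff, Walk.cons_isPath_iff]
      simp [hcb, Ne.symm hca, hab]
    have heq := hu _ _ hp1 hp2
    have := congrArg Walk.length heq
    simp at this
  -- take a shortest (hence the unique) path from x to y
  obtain ⟨p, hp, hpl⟩ := hT.1.exists_path_of_dist x y
  -- destructure the first two edges
  cases p with
  | nil => simp at h2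
  | cons h1 p' =>
    rename_i x1
    cases p' with
    | nil =>
      rw [← hpl] at h2; simp at h2
    | cons h2' p'' =>
      rename_i x2
      -- h1 : T.Adj x x1, h2' : T.Adj x1 x2, p'' : T.Walk x2 y
      have hp' : (Walk.cons h2' p'').IsPath := hp.of_cons
      have hxsupp : x ∉ (Walk.cons h2' p'').support := ((Walk.cons_isPath_iff _ _).mp hp).2
      have hp'' : p''.IsPath := hp'.of_cons
      have hx1supp : x1 ∉ p''.support := ((Walk.cons_isPath_iff _ _).mp hp').2
      have hxx1 : x ≠ x1 := h1.ne
      have hx1x2 : x1 ≠ x2 := h2'.ne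
      have hx2supp : x2 ∈ (Walk.cons h2' p'').support := by simp
      have hxx2 : x ≠ x2 := fun h => hxsupp (h ▸ hx2supp)
      have hxp'' : x ∉ p''.support := by
        intro h
        exact hxsupp (by simp [h])
      have hplen : (Walk.cons h1 (Walk.cons h2' p'')).length = T.dist x y := hpl
      -- x is a leaf with neighbor x1
      have leafx : ∀ z : V, T.Adj x z → z = x1 := by
        intro z hz
        by_cases hzs : z ∈ (Walk.cons h2' p'').support
        · -- the path from x to z along p must be the edge
          have hq2 : (Walk.cons h1 ((Walk.cons h2' p'').takeUntil z hzs)).IsPath := by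
            rw [Walk.cons_isPath_iff]
            exact ⟨hp'.takeUntil hzs,
              fun h => hxsupp (Walk.support_takeUntil_subset _ hzs h)⟩
          have hq1 : (Walk.cons hz Walk.nil).IsPath := by
            rw [Walk.cons_isPath_iff]
            simp [hz.ne]
          have e1 := plen _ hq1
          have e2 := plen _ hq2
          simp only [Walk.length_cons, Walk.length_nil] at e1 e2
          have : ((Walk.cons h2' p'').takeUntil z hzs).length = 0 := by omega
          exact (Walk.eq_of_length_eq_zero this).symm
        · -- otherwise we get a longer path to y
          exfalso
          have hq : (Walk.cons hz.symm (Walk.cons h1 (Walk.cons h2' p''))).IsPath := by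
            rw [Walk.cons_isPath_iff]
            refine ⟨hp, ?_⟩
            simp only [Walk.support_cons, List.mem_cons, not_or]
            refine ⟨hz.ne', ?_⟩
            simpa [Walk.support_cons, not_or] using hzs
          have := plen _ hq
          simp only [Walk.length_cons] at this hplen
          have hle := hmax' z y
          omega
      -- any neighbor of x1 other than x, x2 is a leaf
      have leafz : ∀ z : V, T.Adj x1 z → z ≠ x → z ≠ x2 → ∀ w : V, T.Adj z w → w = x1 := by
        intro z hz hzx hzx2
        -- first, z is not on the path
        have hzp'' : z ∉ p''.support := by
          intro hmem
          have hq2 : (Walk.cons h2' (p''.takeUntil z hmem)).IsPath := by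
            rw [Walk.cons_isPath_iff]
            exact ⟨hp''.takeUntil hmem,
              fun h => hx1supp (Walk.support_takeUntil_subset _ hmem h)⟩
          have hq1 : (Walk.cons hz Walk.nil).IsPath := by
            rw [Walk.cons_isPath_iff]
            simp [hz.ne]
          have e1 := plen _ hq1
          have e2 := plen _ hq2
          simp only [Walk.length_cons, Walk.length_nil] at e1 e2
          have h0 : (p''.takeUntil z hmem).length ≠ 0 :=
            fun h => hzx2 (Walk.eq_of_length_eq_zero h).symm
          omega
        intro w hw
        by_contra hwx1
        by_cases hws : w ∈ p''.support
        · -- two distinct paths from z to w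
          have hq2 : (Walk.cons hz.symm (Walk.cons h2' (p''.takeUntil w hws))).IsPath := by
            rw [Walk.cons_isPath_iff, Walk.cons_isPath_iff]
            refine ⟨⟨hp''.takeUntil hws,
              fun h => hx1supp (Walk.support_takeUntil_subset _ hws h)⟩, ?_⟩
            simp only [Walk.support_cons, List.mem_cons, not_or]
            exact ⟨hz.ne', fun h => hzp'' (Walk.support_takeUntil_subset _ hws h)⟩
          have hq1 : (Walk.cons hw Walk.nil).IsPath := by
            rw [Walk.cons_isPath_iff]
            simp [hw.ne]
          have e1 := plen _ hq1
          have e2 := plen _ hq2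
          simp only [Walk.length_cons, Walk.length_nil] at e1 e2
          omega
        · -- longer path from w to y
          have hq : (Walk.cons hw.symm (Walk.cons hz.symm (Walk.cons h2' p''))).IsPath := by
            rw [Walk.cons_isPath_iff, Walk.cons_isPath_iff]
            constructor
            · refine ⟨hp', ?_⟩
              simp only [Walk.support_cons, List.mem_cons, not_or]
              exact ⟨hz.ne', hzp''⟩
            · simp only [Walk.support_cons, List.mem_cons, not_or]
              exact ⟨hw.ne', hwx1, hws⟩
          have := plen _ hq
          simp only [Walk.length_cons] at this hplen
          have hle := hmax' w y
          omega
      -- assemble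
      by_cases hex : ∃ z : V, T.Adj x1 z ∧ z ≠ x ∧ z ≠ x2
      · obtain ⟨z, hz, hzx, hzx2⟩ := hex
        left
        refine ⟨x, z, x1, fun h => hzx h.symm, hxx1, hz.ne', ?_, ?_⟩
        · ext w
          simp only [mem_neighborSet, Set.mem_singleton_iff]
          exact ⟨fun h => leafx w h, fun h => h ▸ h1⟩
        · ext w
          simp only [mem_neighborSet, Set.mem_singleton_iff]
          exact ⟨fun h => leafz z hz hzx hzx2 w h, fun h => h ▸ hz.symm⟩
      · push_neg at hex
        right
        refine ⟨x2, x1, x, Ne.symm hx1x2, Ne.symm hxx2, Ne.symm hxx1, ?_, ?_⟩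
        · ext w
          simp only [mem_neighborSet, Set.mem_insert_iff, Set.mem_singleton_iff]
          constructor
          · intro h
            by_cases hwx : w = x
            · exact Or.inr hwx
            · exact Or.inl (hex w h hwx)
          · rintro (rfl | rfl)
            · exact h2'
            · exact h1.symm
        · ext w
          simp only [mem_neighborSet, Set.mem_singleton_iff]
          exact ⟨fun h => leafx w h, fun h => h ▸ h1⟩
end

section
/- Let H be a finite simple graph with distinct vertices u, v, w such that N_H(v) = {u, w} and N_H(w) = {v}, and let H' = H - w - v. If the dominating graph D(H') has a Hamilton path, then D(H) has a Hamilton path. -/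
open SimpleGraph Finset
open scoped symmDiff

variable {V : Type*}

namespace Op2Aux

open Function
open scoped Classical

structure Setup (V : Type*) [Fintype V] [DecidableEq V] where
  H : SimpleGraph V
  u : V
  v : V
  w : V
  huv : u ≠ v
  huw : u ≠ w
  hvw : v ≠ w
  hNv : H.neighborSet v = {u, w}
  hNw : H.neighborSet w = {v}

variable {V : Type*} [Fintype V] [DecidableEq V] (S : Setup V)

namespace Setup

abbrev Vp := {z : V // z ≠ S.v ∧ z ≠ S.w}

abbrev H' : SimpleGraph S.Vp := S.H.comap Subtype.val

abbrev up : S.Vp := ⟨S.u, S.huv, S.huw⟩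

lemma adj_vu : S.H.Adj S.v S.u := by
  rw [← SimpleGraph.mem_neighborSet, S.hNv]; exact Set.mem_insert _ _

lemma adj_vw : S.H.Adj S.v S.w := by
  rw [← SimpleGraph.mem_neighborSet, S.hNv]; exact Set.mem_insert_iff.2 (Or.inr rfl)

lemma adj_wv : S.H.Adj S.w S.v := by
  rw [← SimpleGraph.mem_neighborSet, S.hNw]; rfl

lemma eq_of_adj_v {z : V} (h : S.H.Adj S.v z) : z = S.u ∨ z = S.w := by
  have : z ∈ S.H.neighborSet S.v := h
  rw [S.hNv] at this; simpa using this

lemma eq_of_adj_w {z : V} (h : S.H.Adj S.w z) : z = S.v := by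
  have : z ∈ S.H.neighborSet S.w := h
  rw [S.hNw] at this; simpa using this

def ι (D : Finset S.Vp) : Finset V := D.image Subtype.val

lemma mem_ι {z : S.Vp} {D : Finset S.Vp} : z.1 ∈ S.ι D ↔ z ∈ D := by
  simp only [ι, Finset.mem_image]
  constructor
  · rintro ⟨a, ha, hav⟩; rwa [show z = a from Subtype.ext hav.symm]
  · exact fun h => ⟨z, h, rfl⟩

lemma mem_ι_elim {z : V} {D : Finset S.Vp} (h : z ∈ S.ι D) : z ≠ S.v ∧ z ≠ S.w := by
  simp only [ι, Finset.mem_image] at h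
  obtain ⟨a, _, rfl⟩ := h; exact a.2

lemma v_not_mem_ι {D : Finset S.Vp} : S.v ∉ S.ι D := fun h => (S.mem_ι_elim h).1 rfl

lemma w_not_mem_ι {D : Finset S.Vp} : S.w ∉ S.ι D := fun h => (S.mem_ι_elim h).2 rfl

lemma ι_inj {D D' : Finset S.Vp} (h : S.ι D = S.ι D') : D = D' := by
  ext z
  rw [← S.mem_ι, h, S.mem_ι]

lemma ι_symmDiff (D D' : Finset S.Vp) : S.ι (D ∆ D') = S.ι D ∆ S.ι D' :=
  Finset.image_symmDiff D D' Subtype.val_injective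

lemma card_ι (D : Finset S.Vp) : (S.ι D).card = D.card :=
  Finset.card_image_of_injective _ Subtype.val_injective

def vert (b : Bool) (D : Finset S.Vp) : Finset V :=
  S.ι D ∪ (if b then {S.v, S.w} else {S.v})

def wset (D : Finset S.Vp) : Finset V := S.ι D ∪ {S.w}

lemma mem_vert {z : V} {b : Bool} {D : Finset S.Vp} :
    z ∈ S.vert b D ↔ z ∈ S.ι D ∨ z = S.v ∨ (b = true ∧ z = S.w) := by
  cases b <;> simp [vert] <;> tauto

lemma v_mem_vert {b : Bool} {D : Finset S.Vp} : S.v ∈ S.vert b D := by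
  rw [mem_vert]; tauto

lemma w_mem_vert_iff {b : Bool} {D : Finset S.Vp} : S.w ∈ S.vert b D ↔ b = true := by
  rw [mem_vert]
  constructor
  · rintro (h | h | ⟨hb, _⟩)
    · exact absurd h S.w_not_mem_ι
    · exact absurd h.symm S.hvw
    · exact hb
  · exact fun hb => Or.inr (Or.inr ⟨hb, rfl⟩)

lemma vp_mem_vert {z : S.Vp} {b : Bool} {D : Finset S.Vp} : z.1 ∈ S.vert b D ↔ z ∈ D := by
  rw [mem_vert, S.mem_ι]
  have h1 := z.2.1; have h2 := z.2.2
  tauto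

lemma vp_mem_wset {z : S.Vp} {D : Finset S.Vp} : z.1 ∈ S.wset D ↔ z ∈ D := by
  simp only [wset, Finset.mem_union, Finset.mem_singleton, S.mem_ι]
  have h2 := z.2.2
  tauto

lemma v_not_mem_wset {D : Finset S.Vp} : S.v ∉ S.wset D := by
  simp only [wset, Finset.mem_union, Finset.mem_singleton]
  rintro (h | h)
  · exact S.v_not_mem_ι h
  · exact S.hvw h

lemma w_mem_wset {D : Finset S.Vp} : S.w ∈ S.wset D := by
  simp [wset]

lemma vert_inj {b b' : Bool} {D D' : Finset S.Vp} (h : S.vert b D = S.vert b' D') :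
    b = b' ∧ D = D' := by
  have hb : b = b' := by
    have h1 := S.w_mem_vert_iff (b := b) (D := D)
    have h2 := S.w_mem_vert_iff (b := b') (D := D')
    rw [h] at h1
    cases b <;> cases b' <;> simp_all
  refine ⟨hb, ?_⟩
  ext z
  rw [← S.vp_mem_vert (b := b), h, S.vp_mem_vert]

lemma wset_inj {D D' : Finset S.Vp} (h : S.wset D = S.wset D') : D = D' := by
  ext z
  rw [← S.vp_mem_wset, h, S.vp_mem_wset]

lemma wset_ne_vert {b : Bool} {D D' : Finset S.Vp} : S.wset D ≠ S.vert b D' := fun h => by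
  have := S.v_mem_vert (b := b) (D := D')
  rw [← h] at this
  exact S.v_not_mem_wset this

def Quasi (D : Finset S.Vp) : Prop :=
  ∀ z : S.Vp, z ≠ S.up → z ∉ D → ∃ y ∈ D, S.H'.Adj y z

lemma quasi_of_dom {D : Finset S.Vp} (h : IsDomSet S.H' D) : S.Quasi D :=
  fun z _ hz => h z hz

lemma isDomSet_wset_iff {D : Finset S.Vp} :
    IsDomSet S.H (S.wset D) ↔ IsDomSet S.H' D := by
  constructor
  · intro hd z hz
    have hz1 : z.1 ∉ S.wset D := by rw [S.vp_mem_wset]; exact hz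
    obtain ⟨y, hy, hadj⟩ := hd z.1 hz1
    have hyw : y ≠ S.w := by
      rintro rfl
      exact z.2.1 (S.eq_of_adj_w hadj)
    have hyι : y ∈ S.ι D := by
      rcases Finset.mem_union.1 hy with h | h
      · exact h
      · exact absurd (Finset.mem_singleton.1 h) hyw
    obtain ⟨a, ha, rfl⟩ := Finset.mem_image.1 hyι
    exact ⟨a, ha, hadj⟩
  · intro hd z hz
    by_cases hzv : z = S.v
    · subst hzv
      exact ⟨S.w, S.w_mem_wset, S.adj_wv⟩
    by_cases hzw : z = S.w
    · subst hzw
      exact absurd S.w_mem_wset hz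
    have hzD : (⟨z, hzv, hzw⟩ : S.Vp) ∉ D := by
      intro h
      exact hz (by rw [← S.vp_mem_wset (z := ⟨z, hzv, hzw⟩)] at h; exact h)
    obtain ⟨y, hy, hadj⟩ := hd ⟨z, hzv, hzw⟩ hzD
    exact ⟨y.1, Finset.mem_union.2 (Or.inl (S.mem_ι.2 hy)), hadj⟩

lemma isDomSet_vert_iff {b : Bool} {D : Finset S.Vp} :
    IsDomSet S.H (S.vert b D) ↔ S.Quasi D := by
  constructor
  · intro hd z hzu hz
    have hz1 : z.1 ∉ S.vert b D := by rw [S.vp_mem_vert]; exact hz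
    obtain ⟨y, hy, hadj⟩ := hd z.1 hz1
    have hyv : y ≠ S.v := by
      rintro rfl
      rcases S.eq_of_adj_v hadj with h | h
      · exact hzu (Subtype.ext h)
      · exact z.2.2 h
    have hyw : y ≠ S.w := by
      rintro rfl
      exact z.2.1 (S.eq_of_adj_w hadj)
    have hyι : y ∈ S.ι D := by
      rcases S.mem_vert.1 hy with h | h | ⟨_, h⟩
      · exact h
      · exact absurd h hyv
      · exact absurd h hyw
    obtain ⟨a, ha, rfl⟩ := Finset.mem_image.1 hyι
    exact ⟨a, ha, hadj⟩
  · intro hq z hz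
    by_cases hzv : z = S.v
    · exact absurd (hzv ▸ S.v_mem_vert) hz
    by_cases hzw : z = S.w
    · subst hzw
      exact ⟨S.v, S.v_mem_vert, S.adj_vw⟩
    by_cases hzu : z = S.u
    · subst hzu
      exact ⟨S.v, S.v_mem_vert, S.adj_vu⟩
    have hzD : (⟨z, hzv, hzw⟩ : S.Vp) ∉ D := by
      intro h
      exact hz ((S.vp_mem_vert (z := ⟨z, hzv, hzw⟩)).2 h)
    have hzu' : (⟨z, hzv, hzw⟩ : S.Vp) ≠ S.up := by
      intro h
      exact hzu (congrArg Subtype.val h)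
    obtain ⟨y, hy, hadj⟩ := hq ⟨z, hzv, hzw⟩ hzu' hzD
    exact ⟨y.1, S.mem_vert.2 (Or.inl (S.mem_ι.2 hy)), hadj⟩

lemma mem_vw_of_dom {X : Finset V} (hX : IsDomSet S.H X) : S.v ∈ X ∨ S.w ∈ X := by
  by_contra h
  push_neg at h
  obtain ⟨y, hy, hadj⟩ := hX S.w h.2
  have : y = S.v := S.eq_of_adj_w hadj.symm
  exact h.1 (this ▸ hy)

def res (X : Finset V) : Finset S.Vp := X.subtype _

lemma mem_res {X : Finset V} {z : S.Vp} : z ∈ S.res X ↔ z.1 ∈ X := by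
  simp [res]

lemma mem_ι_res {X : Finset V} {x : V} :
    x ∈ S.ι (S.res X) ↔ x ∈ X ∧ x ≠ S.v ∧ x ≠ S.w := by
  simp only [ι, Finset.mem_image]
  constructor
  · rintro ⟨a, ha, rfl⟩
    exact ⟨S.mem_res.1 ha, a.2⟩
  · rintro ⟨hx, h1, h2⟩
    exact ⟨⟨x, h1, h2⟩, S.mem_res.2 hx, rfl⟩

lemma eq_vert_res {X : Finset V} (hv : S.v ∈ X) (b : Bool) (hb : S.w ∈ X ↔ b = true) :
    X = S.vert b (S.res X) := by
  ext x
  rw [S.mem_vert, S.mem_ι_res]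
  constructor
  · intro hx
    by_cases h1 : x = S.v
    · exact Or.inr (Or.inl h1)
    by_cases h2 : x = S.w
    · exact Or.inr (Or.inr ⟨hb.1 (h2 ▸ hx), h2⟩)
    · exact Or.inl ⟨hx, h1, h2⟩
  · rintro (⟨hx, _⟩ | rfl | ⟨hb', rfl⟩)
    · exact hx
    · exact hv
    · exact hb.2 hb'

lemma eq_wset_res {X : Finset V} (hv : S.v ∉ X) (hw : S.w ∈ X) :
    X = S.wset (S.res X) := by
  ext x
  simp only [wset, Finset.mem_union, Finset.mem_singleton, S.mem_ι_res]
  constructor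
  · intro hx
    by_cases h2 : x = S.w
    · exact Or.inr h2
    · exact Or.inl ⟨hx, fun h => hv (h ▸ hx), h2⟩
  · rintro (⟨hx, _⟩ | rfl)
    · exact hx
    · exact hw

def P (D : Finset S.Vp) : Prop :=
  S.up ∈ D ∧ S.Quasi (D.erase S.up) ∧ ¬ IsDomSet S.H' (D.erase S.up)

lemma insert_dom {D : Finset S.Vp} (hq : S.Quasi D) (hd : ¬ IsDomSet S.H' D) :
    S.up ∉ D ∧ IsDomSet S.H' (insert S.up D) ∧ S.P (insert S.up D) := by
  have hup : S.up ∉ D := by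
    intro h
    exact hd fun z hz => hq z (fun he => hz (he ▸ h)) hz
  have hins : IsDomSet S.H' (insert S.up D) := by
    intro z hz
    have h1 : z ≠ S.up := fun he => hz (he ▸ Finset.mem_insert_self _ _)
    have h2 : z ∉ D := fun he => hz (Finset.mem_insert_of_mem he)
    obtain ⟨y, hy, hadj⟩ := hq z h1 h2
    exact ⟨y, Finset.mem_insert_of_mem hy, hadj⟩
  refine ⟨hup, hins, Finset.mem_insert_self _ _, ?_, ?_⟩ <;>
    rw [Finset.erase_insert hup]
  · exact hq
  · exact hd

lemma symm_union (D₁ D₂ : Finset S.Vp) (S₀ : Finset V)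
    (hS : ∀ x ∈ S₀, x = S.v ∨ x = S.w) :
    (S.ι D₁ ∪ S₀) ∆ (S.ι D₂ ∪ S₀) = S.ι (D₁ ∆ D₂) := by
  rw [S.ι_symmDiff]
  ext x
  by_cases hx : x ∈ S₀
  · have hx1 : x ∉ S.ι D₁ := by
      rcases hS x hx with rfl | rfl
      exacts [S.v_not_mem_ι, S.w_not_mem_ι]
    have hx2 : x ∉ S.ι D₂ := by
      rcases hS x hx with rfl | rfl
      exacts [S.v_not_mem_ι, S.w_not_mem_ι]
    simp [Finset.mem_symmDiff, Finset.mem_union, hx, hx1, hx2]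
  · simp only [Finset.mem_symmDiff, Finset.mem_union, hx, or_false]

lemma vert_eq_union (b : Bool) (D : Finset S.Vp) :
    S.vert b D = S.ι D ∪ (if b then {S.v, S.w} else {S.v}) := rfl

lemma hS_if (b : Bool) : ∀ x ∈ (if b then ({S.v, S.w} : Finset V) else {S.v}),
    x = S.v ∨ x = S.w := by
  cases b <;> intro x hx <;> simp_all <;> tauto

lemma hS_w : ∀ x ∈ ({S.w} : Finset V), x = S.v ∨ x = S.w := by simp

lemma card_symmDiff_vert {b : Bool} {D₁ D₂ : Finset S.Vp} (h : (D₁ ∆ D₂).card = 1) :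
    (S.vert b D₁ ∆ S.vert b D₂).card = 1 := by
  rw [vert_eq_union, vert_eq_union, S.symm_union _ _ _ (S.hS_if b), S.card_ι]
  exact h

lemma card_symmDiff_wset {D₁ D₂ : Finset S.Vp} (h : (D₁ ∆ D₂).card = 1) :
    (S.wset D₁ ∆ S.wset D₂).card = 1 := by
  rw [wset, wset, S.symm_union _ _ _ S.hS_w, S.card_ι]
  exact h

lemma symmDiff_erase {D : Finset S.Vp} (h : S.up ∈ D) : D ∆ D.erase S.up = {S.up} := by
  rw [symmDiff_def]
  rw [Finset.sdiff_erase_self h]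
  have : D.erase S.up \ D = ∅ :=
    Finset.sdiff_eq_empty_iff_subset.2 (Finset.erase_subset _ _)
  rw [this]
  simp

lemma card_symmDiff_vert_erase {b : Bool} {D : Finset S.Vp} (h : S.up ∈ D) :
    (S.vert b D ∆ S.vert b (D.erase S.up)).card = 1 := by
  apply S.card_symmDiff_vert
  rw [S.symmDiff_erase h]
  simp

lemma symm_vert_toggle (b : Bool) (D : Finset S.Vp) :
    (S.vert b D ∆ S.vert (!b) D).card = 1 := by
  have key : ∀ x, x ∈ S.vert false D ∆ S.vert true D ↔ x ∈ ({S.w} : Finset V) := by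
    intro x
    simp only [Finset.mem_symmDiff, S.mem_vert, Finset.mem_singleton]
    by_cases hx : x = S.w
    · subst hx
      simp [S.w_not_mem_ι, S.hvw.symm]
    · simp [hx]
      tauto
  have key2 : S.vert false D ∆ S.vert true D = {S.w} := Finset.ext key
  cases b
  · rw [show (!false) = true from rfl, key2]; simp
  · rw [show (!true) = false from rfl, symmDiff_comm, key2]; simp

lemma symm_wset_vert (D : Finset S.Vp) :
    (S.wset D ∆ S.vert true D).card = 1 := by
  have : S.wset D ∆ S.vert true D = {S.v} := by
    ext x
    simp only [Finset.mem_symmDiff, S.mem_vert, wset, Finset.mem_union,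
      Finset.mem_singleton]
    by_cases hx : x = S.v
    · subst hx
      simp [S.v_not_mem_ι, S.hvw]
    · simp [hx]
      tauto
  rw [this]
  simp

abbrev DV := {D : Finset V // IsDomSet S.H D}

abbrev DV' := {D : Finset S.Vp // IsDomSet S.H' D}

def WV (D : S.DV') : S.DV := ⟨S.wset D.1, S.isDomSet_wset_iff.2 D.2⟩

@[reducible] def CV (b : Bool) (D : Finset S.Vp) (h : S.Quasi D) : S.DV :=
  ⟨S.vert b D, S.isDomSet_vert_iff.2 h⟩

lemma adj_mk {X Y : S.DV} (h : (X.1 ∆ Y.1).card = 1) : (DomGraph S.H).Adj X Y := h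

def wHom : DomGraph S.H' →g DomGraph S.H where
  toFun := S.WV
  map_rel' := fun h => S.adj_mk (S.card_symmDiff_wset h)

lemma WV_inj : Function.Injective S.WV := fun D₁ D₂ h =>
  Subtype.ext (S.wset_inj (congrArg Subtype.val h))

lemma card_symmDiff_vert_erase' {b : Bool} {D : Finset S.Vp} (h : S.up ∈ D) :
    (S.vert b (D.erase S.up) ∆ S.vert b D).card = 1 := by
  rw [symmDiff_comm]
  exact S.card_symmDiff_vert_erase h

lemma adj_CV_toggle (b : Bool) (D : Finset S.Vp) (h : S.Quasi D) :
    (DomGraph S.H).Adj (S.CV b D h) (S.CV (!b) D h) := S.symm_vert_toggle b D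

lemma adj_CV_CV (b : Bool) {D₁ D₂ : Finset S.Vp} (h1 : S.Quasi D₁) (h2 : S.Quasi D₂)
    (h : (D₁ ∆ D₂).card = 1) :
    (DomGraph S.H).Adj (S.CV b D₁ h1) (S.CV b D₂ h2) := S.card_symmDiff_vert h

lemma adj_CV_erase (b : Bool) {D : Finset S.Vp} (hu : S.up ∈ D) (h1 : S.Quasi D)
    (h2 : S.Quasi (D.erase S.up)) :
    (DomGraph S.H).Adj (S.CV b D h1) (S.CV b (D.erase S.up) h2) :=
  S.card_symmDiff_vert_erase hu

lemma adj_CV_erase' (b : Bool) {D : Finset S.Vp} (hu : S.up ∈ D) (h1 : S.Quasi D)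
    (h2 : S.Quasi (D.erase S.up)) :
    (DomGraph S.H).Adj (S.CV b (D.erase S.up) h2) (S.CV b D h1) :=
  S.card_symmDiff_vert_erase' hu

noncomputable def col (b : Bool) (D : S.DV') :
    (DomGraph S.H).Walk (S.CV b D.1 (S.quasi_of_dom D.2))
      (S.CV (!b) D.1 (S.quasi_of_dom D.2)) :=
  if h : S.P D.1 then
    Walk.cons (S.adj_CV_erase b h.1 (S.quasi_of_dom D.2) h.2.1)
      (Walk.cons (S.adj_CV_toggle b (D.1.erase S.up) h.2.1)
        (Walk.cons (S.adj_CV_erase' (!b) h.1 (S.quasi_of_dom D.2) h.2.1) Walk.nil))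
  else Walk.cons (S.adj_CV_toggle b D.1 (S.quasi_of_dom D.2)) Walk.nil

def ColMem (D : S.DV') (X : S.DV) : Prop :=
  (∃ b, X.1 = S.vert b D.1) ∨ (S.P D.1 ∧ ∃ b, X.1 = S.vert b (D.1.erase S.up))

lemma bool_eq_or (b b' : Bool) : b' = b ∨ b' = !b := by
  cases b <;> cases b' <;> simp

lemma mem_col_support {b : Bool} {D : S.DV'} {X : S.DV} :
    X ∈ (S.col b D).support ↔ S.ColMem D X := by
  unfold col
  split_ifs with h
  · simp only [Walk.support_cons, Walk.support_nil, List.mem_cons,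
      List.mem_singleton, List.not_mem_nil, or_false, ColMem, CV, Subtype.ext_iff]
    constructor
    · rintro (h1 | h1 | h1 | h1)
      · exact Or.inl ⟨b, h1⟩
      · exact Or.inr ⟨h, b, h1⟩
      · exact Or.inr ⟨h, !b, h1⟩
      · exact Or.inl ⟨!b, h1⟩
    · rintro (⟨b', hb'⟩ | ⟨_, b', hb'⟩) <;>
        rcases bool_eq_or b b' with rfl | rfl <;> tauto
  · simp only [Walk.support_cons, Walk.support_nil, List.mem_cons,
      List.mem_singleton, List.not_mem_nil, or_false, ColMem, CV, Subtype.ext_iff]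
    constructor
    · rintro (h1 | h1)
      · exact Or.inl ⟨b, h1⟩
      · exact Or.inl ⟨!b, h1⟩
    · rintro (⟨b', hb'⟩ | ⟨hP, _⟩)
      · rcases bool_eq_or b b' with rfl | rfl <;> tauto
      · exact absurd hP h

lemma colMem_inj {D₁ D₂ : S.DV'} {X : S.DV} (h₁ : S.ColMem D₁ X)
    (h₂ : S.ColMem D₂ X) : D₁ = D₂ := by
  apply Subtype.ext
  rcases h₁ with ⟨b₁, hb₁⟩ | ⟨hP₁, b₁, hb₁⟩ <;>
    rcases h₂ with ⟨b₂, hb₂⟩ | ⟨hP₂, b₂, hb₂⟩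
  · exact (S.vert_inj (hb₁.symm.trans hb₂)).2
  · exact absurd ((S.vert_inj (hb₁.symm.trans hb₂)).2 ▸ D₁.2) hP₂.2.2
  · exact absurd ((S.vert_inj (hb₂.symm.trans hb₁)).2 ▸ D₂.2) hP₁.2.2
  · have he := (S.vert_inj (hb₁.symm.trans hb₂)).2
    calc D₁.1 = insert S.up (D₁.1.erase S.up) := (Finset.insert_erase hP₁.1).symm
    _ = insert S.up (D₂.1.erase S.up) := by rw [he]
    _ = D₂.1 := Finset.insert_erase hP₂.1

lemma col_support_nodup {b : Bool} {D : S.DV'} : (S.col b D).support.Nodup := by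
  unfold col
  have hbne : ∀ (A B : Finset S.Vp), S.vert b A ≠ S.vert (!b) B := by
    intro A B he
    have h1 := (S.vert_inj he).1
    exact absurd h1 (by cases b <;> simp)
  split_ifs with h
  · have hDE : D.1 ≠ D.1.erase S.up := fun he => h.2.2 (he ▸ D.2)
    have ne12 : S.CV b D.1 (S.quasi_of_dom D.2) ≠ S.CV b (D.1.erase S.up) h.2.1 :=
      fun he => hDE (S.vert_inj (congrArg Subtype.val he)).2
    have ne13 : S.CV b D.1 (S.quasi_of_dom D.2) ≠ S.CV (!b) (D.1.erase S.up) h.2.1 :=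
      fun he => hbne _ _ (congrArg Subtype.val he)
    have ne14 : S.CV b D.1 (S.quasi_of_dom D.2) ≠ S.CV (!b) D.1 (S.quasi_of_dom D.2) :=
      fun he => hbne _ _ (congrArg Subtype.val he)
    have ne23 : S.CV b (D.1.erase S.up) h.2.1 ≠ S.CV (!b) (D.1.erase S.up) h.2.1 :=
      fun he => hbne _ _ (congrArg Subtype.val he)
    have ne24 : S.CV b (D.1.erase S.up) h.2.1 ≠ S.CV (!b) D.1 (S.quasi_of_dom D.2) :=
      fun he => hbne _ _ (congrArg Subtype.val he)
    have ne34 : S.CV (!b) (D.1.erase S.up) h.2.1 ≠ S.CV (!b) D.1 (S.quasi_of_dom D.2) :=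
      fun he => hDE ((S.vert_inj (congrArg Subtype.val he)).2).symm
    simp [Walk.support_cons, List.nodup_cons, List.mem_cons,
      ne12, ne13, ne14, ne23, ne24, ne34]
  · have ne14 : S.CV b D.1 (S.quasi_of_dom D.2) ≠ S.CV (!b) D.1 (S.quasi_of_dom D.2) :=
      fun he => hbne _ _ (congrArg Subtype.val he)
    simp [Walk.support_cons, List.nodup_cons, ne14]

noncomputable def serp : ∀ {x y : S.DV'} (b : Bool), (DomGraph S.H').Walk x y →
    (e : S.DV) × (DomGraph S.H).Walk (S.CV b x.1 (S.quasi_of_dom x.2)) e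
  | x, _, b, .nil => ⟨_, S.col b x⟩
  | x, _, b, .cons h q =>
    ⟨(serp (!b) q).1,
      (S.col b x).append
        (Walk.cons (S.adj_CV_CV (!b) _ _ h) (serp (!b) q).2)⟩

lemma serp_support_iff {x y : S.DV'} (q : (DomGraph S.H').Walk x y) :
    ∀ (b : Bool) (X : S.DV),
      X ∈ (S.serp b q).2.support ↔ ∃ D ∈ q.support, S.ColMem D X := by
  induction q with
  | nil =>
    intro b X
    simp [serp, S.mem_col_support]
  | cons h q ih =>
    intro b X
    simp only [serp, Walk.support_append, Walk.support_cons, List.tail_cons,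
      List.mem_append, S.mem_col_support, ih (!b), Walk.support_cons,
      List.mem_cons]
    constructor
    · rintro (hc | ⟨D, hD, hDX⟩)
      · exact ⟨_, Or.inl rfl, hc⟩
      · exact ⟨D, Or.inr hD, hDX⟩
    · rintro ⟨D, rfl | hD, hDX⟩
      · exact Or.inl hDX
      · exact Or.inr ⟨D, hD, hDX⟩

lemma serp_support_nodup {x y : S.DV'} (q : (DomGraph S.H').Walk x y)
    (hq : q.support.Nodup) : ∀ b : Bool, (S.serp b q).2.support.Nodup := by
  induction q with
  | nil =>
    intro b
    simpa [serp] using S.col_support_nodup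
  | cons h q ih =>
    intro b
    rw [Walk.support_cons, List.nodup_cons] at hq
    simp only [serp, Walk.support_append, Walk.support_cons, List.tail_cons]
    rw [List.nodup_append]
    refine ⟨S.col_support_nodup, ih hq.2 (!b), ?_⟩
    intro X hX Y hX' hXY
    subst hXY
    rw [S.mem_col_support] at hX
    rw [S.serp_support_iff] at hX'
    obtain ⟨D, hD, hDX⟩ := hX'
    exact hq.1 ((S.colMem_inj hX hDX) ▸ hD)

lemma cover_vert_aux {x y : S.DV'} (q : (DomGraph S.H').Walk x y)
    (hq : ∀ D : S.DV', D ∈ q.support) (X : S.DV) (hv : S.v ∈ X.1) (b : Bool)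
    (hb : S.w ∈ X.1 ↔ b = true) : X ∈ (S.serp true q).2.support := by
  have hXD := S.eq_vert_res hv b hb
  have hquasi : S.Quasi (S.res X.1) := S.isDomSet_vert_iff.1 (hXD ▸ X.2)
  rw [S.serp_support_iff]
  by_cases hdom : IsDomSet S.H' (S.res X.1)
  · exact ⟨⟨S.res X.1, hdom⟩, hq _, Or.inl ⟨b, hXD⟩⟩
  · obtain ⟨hup, hins, hP⟩ := S.insert_dom hquasi hdom
    refine ⟨⟨insert S.up (S.res X.1), hins⟩, hq _, Or.inr ⟨hP, b, ?_⟩⟩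
    rw [Finset.erase_insert hup]
    exact hXD

lemma adj_WV_CV (D : S.DV') :
    (DomGraph S.H).Adj (S.wHom D) (S.CV true D.1 (S.quasi_of_dom D.2)) :=
  S.symm_wset_vert D.1

noncomputable def fullWalk {a b : S.DV'} (p : (DomGraph S.H').Walk a b) :
    (e : S.DV) × (DomGraph S.H).Walk (S.wHom a) e :=
  ⟨(S.serp true p.reverse).1,
    (p.map S.wHom).append
      (Walk.cons (S.adj_WV_CV b) (S.serp true p.reverse).2)⟩

lemma mem_fullWalk {a b : S.DV'} (p : (DomGraph S.H').Walk a b) (X : S.DV) :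
    X ∈ (S.fullWalk p).2.support ↔
      X ∈ p.support.map S.wHom ∨ X ∈ (S.serp true p.reverse).2.support := by
  simp only [fullWalk, Walk.support_append, Walk.support_cons, List.tail_cons,
    List.mem_append, Walk.support_map]

theorem main (hham : HasHamiltonPath (DomGraph S.H')) :
    HasHamiltonPath (DomGraph S.H) := by
  obtain ⟨a, b, p, hp⟩ := hham
  refine ⟨_, _, (S.fullWalk p).2, ?_⟩
  have hrevnodup : p.reverse.support.Nodup := hp.isPath.reverse.support_nodup
  have hnodup : (S.fullWalk p).2.support.Nodup := by
    simp only [fullWalk, Walk.support_append, Walk.support_cons, List.tail_cons,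
      Walk.support_map]
    rw [List.nodup_append]
    refine ⟨?_, S.serp_support_nodup p.reverse hrevnodup true, ?_⟩
    · exact hp.isPath.support_nodup.map S.WV_inj
    · intro X hX Y hX' hXY
      subst hXY
      rw [List.mem_map] at hX
      obtain ⟨D₀, _, rfl⟩ := hX
      rw [S.serp_support_iff] at hX'
      obtain ⟨D, _, hDX⟩ := hX'
      have hv : S.v ∈ (S.wHom D₀).1 := by
        rcases hDX with ⟨b', hb'⟩ | ⟨_, b', hb'⟩ <;>
          · rw [show ((S.wHom D₀).1 : Finset V) = S.vert b' _ from hb']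
            exact S.v_mem_vert
      exact S.v_not_mem_wset hv
  apply (Walk.IsPath.mk' hnodup).isHamiltonian_of_mem
  intro X
  rw [S.mem_fullWalk]
  by_cases hv : S.v ∈ X.1
  · right
    by_cases hw : S.w ∈ X.1
    · exact S.cover_vert_aux p.reverse
        (fun D => by rw [Walk.support_reverse, List.mem_reverse]; exact hp.mem_support D)
        X hv true (by simp [hw])
    · exact S.cover_vert_aux p.reverse
        (fun D => by rw [Walk.support_reverse, List.mem_reverse]; exact hp.mem_support D)
        X hv false (by simp [hw])
  · left
    have hw : S.w ∈ X.1 := (S.mem_vw_of_dom X.2).resolve_left hv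
    have hXD := S.eq_wset_res hv hw
    have hdom : IsDomSet S.H' (S.res X.1) :=
      S.isDomSet_wset_iff.1 (hXD ▸ X.2)
    rw [List.mem_map]
    refine ⟨⟨S.res X.1, hdom⟩, hp.mem_support _, ?_⟩
    exact Subtype.ext hXD.symm

end Setup
end Op2Aux

theorem operationII_hamilton_path [Fintype V] [DecidableEq V] (H : SimpleGraph V)
    (u v w : V) (huv : u ≠ v) (huw : u ≠ w) (hvw : v ≠ w)
    (hNv : H.neighborSet v = {u, w}) (hNw : H.neighborSet w = {v})
    (h' : HasHamiltonPath (DomGraph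
      (H.comap (Subtype.val : {z : V // z ≠ v ∧ z ≠ w} → V)))) :
    HasHamiltonPath (DomGraph H) :=
  Op2Aux.Setup.main ⟨H, u, v, w, huv, huw, hvw, hNv, hNw⟩ h'
end

section
/- The dominating sets of the cycle C_n are exactly the bitwise complements of the Lucas strings of length n and order 3; i.e., X ⊆ {0,...,n-1} is a dominating set of C_n if and only if the binary string encoding the complement of X lies in L_{n,3}. -/
open SimpleGraph Finset
open scoped symmDiff

variable {V : Type*}

/-- The cycle graph `C_n` on vertex set `ZMod n`: `i` and `j` are adjacent iff
`i - j ≡ ±1 (mod n)` (and `i ≠ j`). -/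
def cycG (n : ℕ) : SimpleGraph (ZMod n) :=
  SimpleGraph.fromRel (fun i j => i - j = 1)

/-- A Lucas string of order 3: a circular binary string with no three
circularly consecutive ones. -/
def IsLucasString3 {n : ℕ} (x : ZMod n → Bool) : Prop :=
  ∀ i : ZMod n, ¬(x (i - 1) = true ∧ x i = true ∧ x (i + 1) = true)

theorem cycle_dominating_iff_complement_lucas (n : ℕ) (hn : 3 ≤ n)
    (X : Finset (ZMod n)) (x : ZMod n → Bool) (hx : ∀ i, x i = true ↔ i ∈ X) :
    IsDomSet (cycG n) X ↔ IsLucasString3 (fun i => !(x i)) := by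
  haveI : Fact (1 < n) := ⟨by omega⟩
  have hx' : ∀ i : ZMod n, (!(x i)) = true ↔ i ∉ X := by
    intro i
    rw [Bool.not_eq_true', ← Bool.not_eq_true, not_iff_not]
    exact hx i
  constructor
  · intro hD i ⟨h1, h2, h3⟩
    have hi : i ∉ X := (hx' i).1 h2
    obtain ⟨y, hy, hadj⟩ := hD i hi
    rw [cycG, SimpleGraph.fromRel_adj] at hadj
    obtain ⟨hne, hc | hc⟩ := hadj
    · have : y = i + 1 := by linear_combination hc
      exact (hx' (i + 1)).1 h3 (this ▸ hy)
    · have : y = i - 1 := by linear_combination -hc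
      exact (hx' (i - 1)).1 h1 (this ▸ hy)
  · intro hL z hz
    have hzf : (!(x z)) = true := (hx' z).2 hz
    have := hL z
    simp only [hzf, true_and, not_and] at this
    by_cases h1 : z - 1 ∈ X
    · refine ⟨z - 1, h1, ?_⟩
      rw [cycG, SimpleGraph.fromRel_adj]
      refine ⟨?_, Or.inr (by ring)⟩
      intro h
      have : (1 : ZMod n) = 0 := by linear_combination -h
      exact one_ne_zero this
    · have h2 : z + 1 ∈ X := by
        by_contra h2
        exact this ((hx' _).2 h1) ((hx' _).2 h2)
      refine ⟨z + 1, h2, ?_⟩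
      rw [cycG, SimpleGraph.fromRel_adj]
      refine ⟨?_, Or.inl (by ring)⟩
      intro h
      have : (1 : ZMod n) = 0 := by linear_combination h
      exact one_ne_zero this
end

section
/- For every n ≥ 1, the dominating graph D(P_n) of the path on n vertices has a Hamilton path. -/
open SimpleGraph Finset
open scoped symmDiff

variable {V : Type*}

namespace PathHam

/-! ### The automaton predicate for domination -/

/-- `fa l k = true` iff every index `i ≥ 1` of `l` is dominated, plus a condition at
index `0` depending on `k`: for `k = 1` index `0` must be dominated too; for `k = 0`
additionally `l` must start with `true`; for `k = 2` no condition at index `0`. -/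
def fa : List Bool → ℕ → Bool
  | [], k => decide (k ≠ 0)
  | true :: l, _ => fa l 2
  | false :: l, k + 1 => fa l k
  | false :: _, 0 => false

/-- Number of positions where two lists differ. -/
def dB : List Bool → List Bool → ℕ
  | a :: l, b :: l' => (if a = b then 0 else 1) + dB l l'
  | _, _ => 0

@[simp] lemma dB_cons (a b : Bool) (l l' : List Bool) :
    dB (a :: l) (b :: l') = (if a = b then 0 else 1) + dB l l' := rfl

lemma dB_self : ∀ l : List Bool, dB l l = 0
  | [] => rfl
  | a :: l => by simp [dB_self l]

lemma dB_comm : ∀ l l' : List Bool, dB l l' = dB l' l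
  | [], [] => rfl
  | [], _ :: _ => rfl
  | _ :: _, [] => rfl
  | a :: l, b :: l' => by
      simp [dB_comm l l']
      rcases a <;> rcases b <;> simp

/-! ### The Gray-code lists -/

/-- Auxiliary triple `(pw (m-1), pw m, pd m)` (dummy first component at `m = 0`). -/
def T : ℕ → List (List Bool) × List (List Bool) × List (List Bool)
  | 0 => ([[]], [[]], [[]])
  | m + 1 =>
      ⟨(T m).2.1,
       ((T m).2.1).reverse.map (true :: ·) ++ ((T m).2.2).map (false :: ·),
       if m = 0 then [[true]] else
         ((T m).2.1).reverse.map (true :: ·) ++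
           ((T m).1).reverse.map (fun l => false :: true :: l)⟩

/-- Gray code listing of all `l` with `fa l 2 = true` of length `m`. -/
def pw (m : ℕ) : List (List Bool) := (T m).2.1

/-- Gray code listing of all `l` with `fa l 1 = true` of length `m`. -/
def pd (m : ℕ) : List (List Bool) := (T m).2.2

lemma pw_succ (m : ℕ) :
    pw (m + 1) = (pw m).reverse.map (true :: ·) ++ (pd m).map (false :: ·) := rfl

lemma T_fst (m : ℕ) : (T (m + 1)).1 = pw m := rfl

lemma pd_two (m : ℕ) :
    pd (m + 2) = (pw (m + 1)).reverse.map (true :: ·) ++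
      (pw m).reverse.map (fun l => false :: true :: l) := by
  show (T (m + 2)).2.2 = _
  simp [T, T_fst, pw, pd]

lemma pw_ne_nil : ∀ m, pw m ≠ []
  | 0 => by decide
  | m + 1 => by
      rw [pw_succ]
      intro h
      rcases List.append_eq_nil_iff.1 h with ⟨h1, _⟩
      exact pw_ne_nil m (List.reverse_eq_nil_iff.1 (List.map_eq_nil_iff.1 h1))

lemma pd_ne_nil : ∀ m, pd m ≠ []
  | 0 => by decide
  | 1 => by decide
  | m + 2 => by
      rw [pd_two]
      intro h
      rcases List.append_eq_nil_iff.1 h with ⟨h1, _⟩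
      exact pw_ne_nil (m + 1) (List.reverse_eq_nil_iff.1 (List.map_eq_nil_iff.1 h1))

lemma head?_pw_succ (m : ℕ) :
    (pw (m + 1)).head? = ((pw m).getLast?).map (true :: ·) := by
  rw [pw_succ, List.head?_append]
  rw [List.head?_map, List.head?_reverse]
  rcases h : (pw m).getLast? with _ | d
  · exact absurd (List.getLast?_eq_none_iff.1 h) (pw_ne_nil m)
  · rfl

lemma head?_pd_eq : ∀ m, (pd m).head? = (pw m).head?
  | 0 => rfl
  | 1 => by decide
  | m + 2 => by
      rw [pd_two, pw_succ (m + 1), List.head?_append, List.head?_append]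
      rw [List.head?_map, List.head?_reverse]
      rcases h : (pw (m + 1)).getLast? with _ | d
      · exact absurd (List.getLast?_eq_none_iff.1 h) (pw_ne_nil (m + 1))
      · rfl

/-! ### Chain property -/

lemma chain_revmap (f : List Bool → List Bool)
    (hf : ∀ a b, dB (f a) (f b) = dB a b) {L : List (List Bool)}
    (h : List.Chain' (fun a b => dB a b = 1) L) :
    List.Chain' (fun a b => dB a b = 1) (L.reverse.map f) := by
  apply (List.isChain_map f).2
  rw [List.isChain_reverse]
  exact h.imp (fun a b hab => by rw [hf, dB_comm]; exact hab)

lemma chain_map (f : List Bool → List Bool)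
    (hf : ∀ a b, dB (f a) (f b) = dB a b) {L : List (List Bool)}
    (h : List.Chain' (fun a b => dB a b = 1) L) :
    List.Chain' (fun a b => dB a b = 1) (L.map f) := by
  apply (List.isChain_map f).2
  exact h.imp (fun a b hab => by rw [hf]; exact hab)

lemma dB_cons_same (c : Bool) (a b : List Bool) : dB (c :: a) (c :: b) = dB a b := by
  simp

lemma chain_main : ∀ m, List.Chain' (fun a b => dB a b = 1) (pw m) ∧
    List.Chain' (fun a b => dB a b = 1) (pd m) := by
  intro m
  induction m using Nat.strong_induction_on with
  | _ m ih =>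
    match m with
    | 0 => exact ⟨List.isChain_singleton _, List.isChain_singleton _⟩
    | 1 =>
      constructor
      · show List.Chain' _ [[true], [false]]
        exact List.isChain_pair.2 (by decide)
      · exact List.isChain_singleton _
    | m + 2 =>
      obtain ⟨hW1, hD1⟩ := ih (m + 1) (by omega)
      obtain ⟨hW0, _⟩ := ih m (by omega)
      obtain ⟨d, hd⟩ : ∃ d, (pw (m + 1)).head? = some d := by
        rcases h : (pw (m + 1)).head? with _ | d
        · exact absurd (List.head?_eq_none_iff.1 h) (pw_ne_nil (m + 1))
        · exact ⟨d, rfl⟩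
      obtain ⟨g, hg⟩ : ∃ g, (pw m).getLast? = some g := by
        rcases h : (pw m).getLast? with _ | g
        · exact absurd (List.getLast?_eq_none_iff.1 h) (pw_ne_nil m)
        · exact ⟨g, rfl⟩
      have hlast1 : ((pw (m + 1)).reverse.map (true :: ·)).getLast? = some (true :: d) := by
        rw [List.getLast?_map, List.getLast?_reverse, hd]; rfl
      constructor
      · rw [pw_succ (m + 1)]
        apply List.isChain_append.2
        refine ⟨chain_revmap _ (fun a b => dB_cons_same _ _ _) hW1,
                chain_map _ (fun a b => dB_cons_same _ _ _) hD1, ?_⟩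
        intro x hx y hy
        rw [hlast1, Option.mem_def] at hx
        rw [List.head?_map, head?_pd_eq, hd, Option.mem_def] at hy
        cases hx; cases hy
        simp [dB_self]
      · rw [pd_two]
        apply List.isChain_append.2
        refine ⟨chain_revmap _ (fun a b => dB_cons_same _ _ _) hW1,
                chain_revmap _ (fun a b => by simp) hW0, ?_⟩
        intro x hx y hy
        rw [hlast1, Option.mem_def] at hx
        rw [List.head?_map, List.head?_reverse, hg, Option.mem_def] at hy
        cases hx; cases hy
        have hd' : d = true :: g := by
          have := head?_pw_succ m
          rw [hd, hg] at this
          simpa using this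
        subst hd'
        simp [dB_self]

/-! ### Membership: lengths and the automaton predicate -/

lemma mem_spec : ∀ m, (∀ l ∈ pw m, l.length = m ∧ fa l 2 = true) ∧
    (∀ l ∈ pd m, l.length = m ∧ fa l 1 = true) := by
  intro m
  induction m using Nat.strong_induction_on with
  | _ m ih =>
    match m with
    | 0 => exact ⟨by decide, by decide⟩
    | 1 => exact ⟨by decide, by decide⟩
    | m + 2 =>
      obtain ⟨hW1, hD1⟩ := ih (m + 1) (by omega)
      obtain ⟨hW0, _⟩ := ih m (by omega)
      constructor
      · rw [pw_succ (m + 1)]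
        intro l hl
        rcases List.mem_append.1 hl with h | h
        · obtain ⟨x, hx, rfl⟩ := List.mem_map.1 h
          obtain ⟨h1, h2⟩ := hW1 x (List.mem_reverse.1 hx)
          exact ⟨by simp [h1], by simpa [fa] using h2⟩
        · obtain ⟨x, hx, rfl⟩ := List.mem_map.1 h
          obtain ⟨h1, h2⟩ := hD1 x hx
          exact ⟨by simp [h1], by simpa [fa] using h2⟩
      · rw [pd_two]
        intro l hl
        rcases List.mem_append.1 hl with h | h
        · obtain ⟨x, hx, rfl⟩ := List.mem_map.1 h
          obtain ⟨h1, h2⟩ := hW1 x (List.mem_reverse.1 hx)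
          exact ⟨by simp [h1], by simpa [fa] using h2⟩
        · obtain ⟨x, hx, rfl⟩ := List.mem_map.1 h
          obtain ⟨h1, h2⟩ := hW0 x (List.mem_reverse.1 hx)
          exact ⟨by simp [h1], by simpa [fa] using h2⟩

lemma mem_complete : ∀ m, (∀ l : List Bool, l.length = m → fa l 2 = true → l ∈ pw m) ∧
    (∀ l : List Bool, l.length = m → fa l 1 = true → l ∈ pd m) := by
  intro m
  induction m using Nat.strong_induction_on with
  | _ m ih =>
    match m with
    | 0 =>
      constructor <;> · intro l hl _; rw [List.length_eq_zero_iff.1 hl]; decide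
    | 1 =>
      constructor <;>
      · intro l hl hfa
        match l, hl with
        | [b], _ =>
          rcases b
          · first
            | exact (by decide : ([false] : List Bool) ∈ pw 1)
            | (exfalso; revert hfa; decide)
          · first
            | exact (by decide : ([true] : List Bool) ∈ pw 1)
            | exact (by decide : ([true] : List Bool) ∈ pd 1)
    | m + 2 =>
      obtain ⟨hW1, hD1⟩ := ih (m + 1) (by omega)
      obtain ⟨hW0, _⟩ := ih m (by omega)
      constructor
      · intro l hl hfa
        match l with
        | true :: x =>
          rw [pw_succ (m + 1)]
          refine List.mem_append.2 (Or.inl (List.mem_map.2 ⟨x, List.mem_reverse.2 ?_, rfl⟩))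
          exact hW1 x (by simpa using hl) (by simpa [fa] using hfa)
        | false :: x =>
          rw [pw_succ (m + 1)]
          refine List.mem_append.2 (Or.inr (List.mem_map.2 ⟨x, ?_, rfl⟩))
          exact hD1 x (by simpa using hl) (by simpa [fa] using hfa)
      · intro l hl hfa
        match l with
        | true :: x =>
          rw [pd_two]
          refine List.mem_append.2 (Or.inl (List.mem_map.2 ⟨x, List.mem_reverse.2 ?_, rfl⟩))
          exact hW1 x (by simpa using hl) (by simpa [fa] using hfa)
        | false :: true :: y =>
          rw [pd_two]
          refine List.mem_append.2 (Or.inr (List.mem_map.2 ⟨y, List.mem_reverse.2 ?_, rfl⟩))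
          exact hW0 y (by simpa using hl) (by simpa [fa] using hfa)
        | false :: false :: y =>
          exfalso; simp [fa] at hfa
        | [false] => exfalso; simp at hl

lemma nodup_main : ∀ m, (pw m).Nodup ∧ (pd m).Nodup := by
  intro m
  induction m using Nat.strong_induction_on with
  | _ m ih =>
    match m with
    | 0 => exact ⟨by decide, by decide⟩
    | 1 => exact ⟨by decide, by decide⟩
    | m + 2 =>
      obtain ⟨hW1, hD1⟩ := ih (m + 1) (by omega)
      obtain ⟨hW0, _⟩ := ih m (by omega)
      constructor
      · rw [pw_succ (m + 1)]
        apply List.Nodup.append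
        · exact (List.nodup_reverse.2 hW1).map (fun a b h => by simpa using h)
        · exact hD1.map (fun a b h => by simpa using h)
        · intro a ha hb
          obtain ⟨x, _, rfl⟩ := List.mem_map.1 ha
          obtain ⟨y, _, h⟩ := List.mem_map.1 hb
          simp at h
      · rw [pd_two]
        apply List.Nodup.append
        · exact (List.nodup_reverse.2 hW1).map (fun a b h => by simpa using h)
        · exact (List.nodup_reverse.2 hW0).map (fun a b h => by simpa using h)
        · intro a ha hb
          obtain ⟨x, _, rfl⟩ := List.mem_map.1 ha
          obtain ⟨y, _, h⟩ := List.mem_map.1 hb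
          simp at h

/-! ### Semantics of the automaton -/

/-- Bit `i` of `l` (out of range: `false`). -/
def bit (l : List Bool) (i : ℕ) : Bool := l.getD i false

@[simp] lemma bit_nil (i : ℕ) : bit [] i = false := by simp [bit]

@[simp] lemma bit_cons_zero (b : Bool) (l : List Bool) : bit (b :: l) 0 = b := rfl

@[simp] lemma bit_cons_succ (b : Bool) (l : List Bool) (i : ℕ) :
    bit (b :: l) (i + 1) = bit l i := by simp [bit]

/-- Vertex `i` is dominated in `l`. -/
def domAt (l : List Bool) (i : ℕ) : Prop :=
  bit l i = true ∨ bit l (i + 1) = true ∨ (1 ≤ i ∧ bit l (i - 1) = true)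

lemma domAt_cons_succ_succ (b : Bool) (l : List Bool) (i : ℕ) :
    domAt (b :: l) (i + 2) ↔ domAt l (i + 1) := by
  simp [domAt]

lemma domAt_cons_one (b : Bool) (l : List Bool) :
    domAt (b :: l) 1 ↔ (bit l 0 = true ∨ bit l 1 = true ∨ b = true) := by
  simp [domAt]

lemma domAt_cons_zero (b : Bool) (l : List Bool) :
    domAt (b :: l) 0 ↔ (b = true ∨ bit l 0 = true) := by
  simp [domAt]

lemma bit_lt_of_true {l : List Bool} {i : ℕ} (h : bit l i = true) : i < l.length := by
  by_contra hc
  rw [bit, List.getD_eq_default _ _ (by omega)] at h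
  exact Bool.noConfusion h

lemma fa_sem : ∀ l : List Bool,
    (fa l 2 = true ↔ ∀ i, 1 ≤ i → i < l.length → domAt l i) ∧
    (fa l 1 = true ↔ ∀ i, i < l.length → domAt l i) ∧
    (fa l 0 = true ↔ (bit l 0 = true ∧ ∀ i, i < l.length → domAt l i)) := by
  intro l
  induction l with
  | nil =>
    refine ⟨by simp [fa], by simp [fa], ?_⟩
    simp [fa]
  | cons b t iht =>
    obtain ⟨ih2, ih1, ih0⟩ := iht
    rcases b
    · -- b = false
      have h2 : fa (false :: t) 2 = fa t 1 := rfl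
      have h1 : fa (false :: t) 1 = fa t 0 := rfl
      have h0 : fa (false :: t) 0 = false := rfl
      refine ⟨?_, ?_, ?_⟩
      · rw [h2, ih1]
        constructor
        · intro h i hi1 hi2
          match i, hi1 with
          | 1, _ =>
            rw [domAt_cons_one]
            have h0' := h 0 (by simp at hi2; omega)
            rcases h0' with h' | h' | h'
            · exact Or.inl h'
            · exact Or.inr (Or.inl h')
            · omega
          | (j + 2), _ =>
            rw [domAt_cons_succ_succ]
            exact h (j + 1) (by simp at hi2; omega)
        · intro h i hi
          match i with
          | 0 =>
            have h1' := h 1 (by omega) (by simp; omega)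
            rw [domAt_cons_one] at h1'
            rcases h1' with h' | h' | h'
            · exact Or.inl h'
            · exact Or.inr (Or.inl h')
            · exact Bool.noConfusion h'
          | (j + 1) =>
            have := h (j + 2) (by omega) (by simp; omega)
            rwa [domAt_cons_succ_succ] at this
      · rw [h1, ih0]
        constructor
        · rintro ⟨hb, h⟩ i hi
          match i with
          | 0 => exact (domAt_cons_zero _ _).2 (Or.inr hb)
          | 1 =>
            rw [domAt_cons_one]
            exact Or.inl hb
          | (j + 2) =>
            rw [domAt_cons_succ_succ]
            exact h (j + 1) (by simp at hi; omega)
        · intro h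
          have hb : bit t 0 = true := by
            have h0' := h 0 (by simp)
            rw [domAt_cons_zero] at h0'
            rcases h0' with h' | h'
            · exact Bool.noConfusion h'
            · exact h'
          refine ⟨hb, fun i hi => ?_⟩
          match i with
          | 0 => exact Or.inl hb
          | (j + 1) =>
            have := h (j + 2) (by simp; omega)
            rwa [domAt_cons_succ_succ] at this
      · rw [h0]
        simp [domAt]
    · -- b = true
      have h2 : fa (true :: t) 2 = fa t 2 := rfl
      have h1 : fa (true :: t) 1 = fa t 2 := rfl
      have h0 : fa (true :: t) 0 = fa t 2 := rfl
      have key : (∀ i, 1 ≤ i → i < t.length → domAt t i) ↔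
          (∀ i, i < (true :: t).length → domAt (true :: t) i) := by
        constructor
        · intro h i hi
          match i with
          | 0 => exact (domAt_cons_zero _ _).2 (Or.inl rfl)
          | 1 => exact (domAt_cons_one _ _).2 (Or.inr (Or.inr rfl))
          | (j + 2) =>
            rw [domAt_cons_succ_succ]
            exact h (j + 1) (by omega) (by simp at hi; omega)
        · intro h i hi1 hi2
          match i, hi1 with
          | (j + 1), _ =>
            have := h (j + 2) (by simp; omega)
            rwa [domAt_cons_succ_succ] at this
      refine ⟨?_, ?_, ?_⟩
      · rw [h2, ih2]
        constructor
        · intro h i hi1 hi2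
          exact key.1 h i (by simpa using hi2)
        · intro h i hi1 hi2
          refine key.2 (fun j hj => ?_) i hi1 hi2
          match j with
          | 0 => exact (domAt_cons_zero _ _).2 (Or.inl rfl)
          | (k + 1) => exact h (k + 1) (by omega) hj
      · rw [h1, ih2]
        exact key
      · rw [h0, ih2]
        rw [key]
        simp
/-! ### From bit lists to finsets -/

def toSet (n : ℕ) (l : List Bool) : Finset (Fin n) :=
  univ.filter (fun i => bit l i.val = true)

lemma mem_toSet {n : ℕ} {l : List Bool} {i : Fin n} :
    i ∈ toSet n l ↔ bit l i.val = true := by simp [toSet]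

lemma isDom_iff {n : ℕ} {l : List Bool} (hl : l.length = n) :
    IsDomSet (pathGraph n) (toSet n l) ↔ ∀ i < n, domAt l i := by
  constructor
  · intro h i hi
    by_cases hb : bit l i = true
    · exact Or.inl hb
    · obtain ⟨y, hy, hadj⟩ := h ⟨i, hi⟩ (by simp [mem_toSet, hb])
      rw [mem_toSet] at hy
      rcases pathGraph_adj.1 hadj with hadj' | hadj'
      · have hyv : (y : ℕ) + 1 = i := by simpa using hadj'
        refine Or.inr (Or.inr ⟨by omega, ?_⟩)
        rw [show i - 1 = (y : ℕ) by omega]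
        exact hy
      · have hyv : i + 1 = (y : ℕ) := by simpa using hadj'
        refine Or.inr (Or.inl ?_)
        rw [show i + 1 = (y : ℕ) from hyv]
        exact hy
  · intro h z hz
    rw [mem_toSet] at hz
    rcases h z.val z.isLt with hd | hd | hd
    · exact absurd hd hz
    · have hlt : z.val + 1 < n := by have := bit_lt_of_true hd; omega
      refine ⟨⟨z.val + 1, hlt⟩, mem_toSet.2 hd, pathGraph_adj.2 (Or.inr rfl)⟩
    · obtain ⟨h1, hd⟩ := hd
      have hlt : z.val - 1 < n := by omega
      refine ⟨⟨z.val - 1, hlt⟩, mem_toSet.2 hd, pathGraph_adj.2 (Or.inl ?_)⟩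
      simp
      omega

lemma dB_eq_sum : ∀ (l l' : List Bool), l.length = l'.length →
    dB l l' = ∑ i ∈ Finset.range l.length, (if bit l i = bit l' i then 0 else 1) := by
  intro l
  induction l with
  | nil => intro l' _; simp [dB]
  | cons a t ih =>
    intro l' h
    match l' with
    | b :: t' =>
      have hlen : t.length = t'.length := by simpa using h
      rw [dB_cons]
      simp only [List.length_cons]
      rw [Finset.sum_range_succ' (fun i => if bit (a :: t) i = bit (b :: t') i then 0 else 1)
        t.length]
      simp only [bit_cons_succ, bit_cons_zero]
      rw [← ih t' hlen]; exact add_comm _ _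

lemma symmDiff_card {n : ℕ} {l l' : List Bool} (hl : l.length = n) (hl' : l'.length = n) :
    ((toSet n l) ∆ (toSet n l')).card = dB l l' := by
  have hset : (toSet n l) ∆ (toSet n l') =
      univ.filter (fun i : Fin n => ¬ (bit l i.val = bit l' i.val)) := by
    ext i
    simp only [Finset.mem_symmDiff, mem_toSet, Finset.mem_filter, Finset.mem_univ, true_and]
    rcases h1 : bit l i.val <;> rcases h2 : bit l' i.val <;> simp
  rw [hset, Finset.card_filter]
  rw [Fin.sum_univ_eq_sum_range (fun j => if ¬ (bit l j = bit l' j) then 1 else 0) n]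
  rw [dB_eq_sum l l' (by omega), hl]
  refine Finset.sum_congr rfl (fun i _ => ?_)
  by_cases h : bit l i = bit l' i <;> simp [h]

lemma toSet_inj {n : ℕ} {l l' : List Bool} (hl : l.length = n) (hl' : l'.length = n)
    (h : toSet n l = toSet n l') : l = l' := by
  apply List.ext_getElem (by omega)
  intro i h1 h2
  have hi : i < n := by omega
  have hmem := Finset.ext_iff.1 h ⟨i, hi⟩
  rw [mem_toSet, mem_toSet] at hmem
  have hbit : bit l i = bit l' i := by
    rcases hb : bit l i <;> rcases hb' : bit l' i <;> simp_all
  rwa [bit, bit, List.getD_eq_getElem _ _ (by omega), List.getD_eq_getElem _ _ (by omega)]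
    at hbit

lemma toSet_surj {n : ℕ} (D : Finset (Fin n)) :
    ∃ l : List Bool, l.length = n ∧ toSet n l = D := by
  refine ⟨List.ofFn (fun i : Fin n => decide (i ∈ D)), by simp, ?_⟩
  ext i
  rw [mem_toSet, bit, List.getD_eq_getElem _ _ (by simp [i.isLt])]
  simp

/-! ### Walks from chains -/

lemma exists_walk {α : Type*} (G : SimpleGraph α) :
    ∀ (L : List α) (a : α), List.Chain G.Adj a L →
      ∃ b, ∃ p : G.Walk a b, p.support = a :: L := by
  intro L
  induction L with
  | nil => exact fun a _ => ⟨a, SimpleGraph.Walk.nil, rfl⟩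
  | cons c L ih =>
    intro a h
    simp only [List.Chain, List.isChain_cons_cons] at h
    obtain ⟨b, p, hp⟩ := ih c h.2
    exact ⟨b, SimpleGraph.Walk.cons h.1 p, by simp [hp]⟩

lemma ham_of_list {α : Type*} [DecidableEq α] (G : SimpleGraph α) (L : List α)
    (hne : L ≠ []) (hch : L.Chain' G.Adj) (hnd : L.Nodup) (hall : ∀ a, a ∈ L) :
    HasHamiltonPath G := by
  match L, hne, hch, hnd, hall with
  | a :: L', _, hch, hnd, hall =>
    obtain ⟨b, p, hp⟩ := exists_walk G L' a hch
    refine ⟨a, b, p, fun v => ?_⟩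
    rw [hp]
    exact List.count_eq_one_of_mem hnd (hall v)

lemma chain'_imp_mem {α : Type*} {R S : α → α → Prop} :
    ∀ {L : List α}, (∀ a ∈ L, ∀ b ∈ L, R a b → S a b) → List.Chain' R L →
      List.Chain' S L := by
  intro L
  induction L with
  | nil => exact fun _ _ => List.isChain_nil
  | cons a L ih =>
    intro h hc
    simp only [List.Chain', List.isChain_cons] at hc ⊢
    refine ⟨?_, ih (fun x hx y hy => h x (by simp [hx]) y (by simp [hy])) hc.2⟩
    intro y hy
    exact h a (by simp) y (by simp [List.mem_of_mem_head? hy]) (hc.1 y hy)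

end PathHam

theorem path_domGraph_hamilton_path (n : ℕ) (hn : 1 ≤ n) :
    HasHamiltonPath (DomGraph (pathGraph n)) := by
  classical
  set L : List (Finset (Fin n)) := (PathHam.pd n).map (PathHam.toSet n) with hL
  have hspec := (PathHam.mem_spec n).2
  have hdomL : ∀ D ∈ L, IsDomSet (pathGraph n) D := by
    intro D hD
    obtain ⟨x, hx, rfl⟩ := List.mem_map.1 hD
    obtain ⟨hlen, hfa⟩ := hspec x hx
    rw [PathHam.isDom_iff hlen]
    exact fun i hi => ((PathHam.fa_sem x).2.1.1 hfa) i (by omega)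
  set LS : List {D : Finset (Fin n) // IsDomSet (pathGraph n) D} :=
    L.pmap (fun D h => ⟨D, h⟩) hdomL with hLS
  have hval : LS.map Subtype.val = L := by
    rw [hLS, List.map_pmap]
    exact (List.pmap_eq_map _).trans (List.map_id L)
  apply PathHam.ham_of_list (DomGraph (pathGraph n)) LS
  · intro h
    apply PathHam.pd_ne_nil n
    have hlen := congrArg List.length h
    rw [hLS, List.length_pmap, hL, List.length_map] at hlen
    exact List.length_eq_zero_iff.1 hlen
  · have hchain : List.Chain' (fun a b : Finset (Fin n) => (a ∆ b).card = 1) L := by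
      rw [hL]
      apply (List.isChain_map _).2
      apply PathHam.chain'_imp_mem (R := fun a b => PathHam.dB a b = 1) ?_
        (PathHam.chain_main n).2
      intro a ha b hb hab
      rw [PathHam.symmDiff_card (hspec a ha).1 (hspec b hb).1]
      exact hab
    have := (List.isChain_map (Subtype.val) (l := LS)
      (R := fun a b : Finset (Fin n) => (a ∆ b).card = 1)).1 (by rwa [hval])
    exact this
  · have h1 : (LS.map Subtype.val).Nodup := by
      rw [hval, hL]
      exact List.Nodup.map_on
        (fun x hx y hy hxy => PathHam.toSet_inj (hspec x hx).1 (hspec y hy).1 hxy)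
        (PathHam.nodup_main n).2
    exact h1.of_map
  · rintro ⟨D, hD⟩
    obtain ⟨l, hlen, hTS⟩ := PathHam.toSet_surj D
    have hfa : PathHam.fa l 1 = true :=
      (PathHam.fa_sem l).2.1.2
        (fun i hi => (PathHam.isDom_iff hlen).1 (hTS ▸ hD) i (by omega))
    have hlmem : l ∈ PathHam.pd n := (PathHam.mem_complete n).2 l hlen hfa
    have hDL : D ∈ L := by rw [hL]; exact List.mem_map.2 ⟨l, hlmem, hTS⟩
    rw [hLS]
    exact List.mem_pmap.2 ⟨D, hDL, rfl⟩
end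

section
/- Let H be a graph with distinct vertices u, v, w such that N_H(v) = {u, w} and N_H(w) = {v}, and let H' = H − w − v. Then every dominating set of H contains at least one of v and w, and D is a dominating set of H if and only if D ∩ {v,w} ≠ ∅ and D \ {v,w} is a dominating set of H' − u with (D\{v,w}) ∩ N_{H'}[u] = ∅ and v ∈ D, or D \ {v,w} is a dominating set of H'. -/
open SimpleGraph Finset
open scoped symmDiff

variable {V : Type*}

theorem operationII_dominating_sets [DecidableEq V] (H : SimpleGraph V) (u v w : V)
    (huv : u ≠ v) (huw : u ≠ w) (hvw : v ≠ w)
    (hNv : H.neighborSet v = {u, w}) (hNw : H.neighborSet w = {v}) :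
    (∀ D : Finset V, IsDomSet H D → v ∈ D ∨ w ∈ D) ∧
    (∀ D : Finset V, IsDomSet H D ↔
      ((v ∈ D ∨ w ∈ D) ∧
        ((IsDomSet
            ((H.comap (Subtype.val : {z : V // z ≠ v ∧ z ≠ w} → V)).comap
              (Subtype.val : {z : {z : V // z ≠ v ∧ z ≠ w} //
                z ≠ (⟨u, huv, huw⟩ : {z : V // z ≠ v ∧ z ≠ w})} → _))
            ((D.subtype (fun z => z ≠ v ∧ z ≠ w)).subtype
              (· ≠ (⟨u, huv, huw⟩ : {z : V // z ≠ v ∧ z ≠ w}))) ∧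
          Disjoint ((D.subtype (fun z => z ≠ v ∧ z ≠ w) : Finset _) : Set _)
            (insert (⟨u, huv, huw⟩ : {z : V // z ≠ v ∧ z ≠ w})
              ((H.comap (Subtype.val : {z : V // z ≠ v ∧ z ≠ w} → V)).neighborSet
                ⟨u, huv, huw⟩)) ∧
          v ∈ D) ∨
        IsDomSet (H.comap (Subtype.val : {z : V // z ≠ v ∧ z ≠ w} → V))
          (D.subtype (fun z => z ≠ v ∧ z ≠ w))))) := by
  have hAdjv : ∀ x, H.Adj v x ↔ (x = u ∨ x = w) := fun x => by
    have := Set.ext_iff.mp hNv x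
    simpa [SimpleGraph.mem_neighborSet] using this
  have hAdjw : ∀ x, H.Adj w x ↔ x = v := fun x => by
    have := Set.ext_iff.mp hNw x
    simpa [SimpleGraph.mem_neighborSet] using this
  have key1 : ∀ D : Finset V, IsDomSet H D → v ∈ D ∨ w ∈ D := by
    intro D hD
    by_contra h
    push_neg at h
    obtain ⟨y, hy, hadj⟩ := hD w h.2
    have : y = v := (hAdjw y).mp hadj.symm
    exact h.1 (this ▸ hy)
  refine ⟨key1, fun D => ⟨fun hD => ⟨key1 D hD, ?_⟩, ?_⟩⟩
  · -- forward
    by_cases hu : u ∈ D ∨ ∃ y ∈ D, y ≠ v ∧ y ≠ w ∧ H.Adj y u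
    · right
      rintro ⟨z, hz1, hz2⟩ hzD
      rw [Finset.mem_subtype] at hzD
      by_cases hzu : z = u
      · subst hzu
        rcases hu with hu | ⟨y, hyD, hyv, hyw, hyadj⟩
        · exact absurd hu hzD
        · exact ⟨⟨y, hyv, hyw⟩, Finset.mem_subtype.mpr hyD, hyadj⟩
      · obtain ⟨y, hyD, hyadj⟩ := hD z hzD
        have hyw : y ≠ w := fun h => hz1 ((hAdjw z).mp (h ▸ hyadj))
        have hyv : y ≠ v := by
          intro h
          rcases (hAdjv z).mp (h ▸ hyadj) with h' | h'
          · exact hzu h'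
          · exact hz2 h'
        exact ⟨⟨y, hyv, hyw⟩, Finset.mem_subtype.mpr hyD, hyadj⟩
    · left
      push_neg at hu
      obtain ⟨huD, hNoNbr⟩ := hu
      have hvD : v ∈ D := by
        obtain ⟨y, hyD, hyadj⟩ := hD u huD
        have hyw : y ≠ w := fun h => huv ((hAdjw u).mp (h ▸ hyadj))
        by_cases hyv : y = v
        · exact hyv ▸ hyD
        · exact absurd hyadj (hNoNbr y hyD hyv hyw)
      refine ⟨?_, ?_, hvD⟩
      · rintro ⟨⟨z, hz1, hz2⟩, hzu⟩ hzD
        rw [Finset.mem_subtype, Finset.mem_subtype] at hzD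
        obtain ⟨y, hyD, hyadj⟩ := hD z hzD
        have hzu' : z ≠ u := fun h => hzu (Subtype.ext h)
        have hyw : y ≠ w := fun h => hz1 ((hAdjw z).mp (h ▸ hyadj))
        have hyv : y ≠ v := by
          intro h
          rcases (hAdjv z).mp (h ▸ hyadj) with h' | h'
          · exact hzu' h'
          · exact hz2 h'
        have hyu : y ≠ u := fun h => huD (h ▸ hyD)
        refine ⟨⟨⟨y, hyv, hyw⟩, fun h => hyu (congrArg Subtype.val h)⟩, ?_, hyadj⟩
        rw [Finset.mem_subtype, Finset.mem_subtype]
        exact hyD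
      · rw [Set.disjoint_left]
        rintro ⟨a, ha1, ha2⟩ haD hmem
        rw [Finset.mem_coe, Finset.mem_subtype] at haD
        rcases hmem with h | h
        · have : a = u := congrArg Subtype.val h
          exact huD (this ▸ haD)
        · have hadj : H.Adj u a := h
          exact hNoNbr a haD ha1 ha2 hadj.symm
  · -- backward
    rintro ⟨hvwD, hA | hB⟩
    · obtain ⟨hDom, hDisj, hvD⟩ := hA
      intro z hzD
      by_cases hzw : z = w
      · exact ⟨v, hvD, by rw [hzw]; exact (hAdjv w).mpr (Or.inr rfl)⟩
      by_cases hzv : z = v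
      · exact absurd (hzv ▸ hvD) hzD
      by_cases hzu : z = u
      · exact ⟨v, hvD, by rw [hzu]; exact (hAdjv u).mpr (Or.inl rfl)⟩
      · have hz' : (⟨⟨z, hzv, hzw⟩, fun h => hzu (congrArg Subtype.val h)⟩ :
            {z : {z : V // z ≠ v ∧ z ≠ w} // z ≠ (⟨u, huv, huw⟩ : {z : V // z ≠ v ∧ z ≠ w})}) ∉
            (D.subtype (fun z => z ≠ v ∧ z ≠ w)).subtype
              (· ≠ (⟨u, huv, huw⟩ : {z : V // z ≠ v ∧ z ≠ w})) := by
          rw [Finset.mem_subtype, Finset.mem_subtype]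
          exact hzD
        obtain ⟨y, hyD, hyadj⟩ := hDom _ hz'
        rw [Finset.mem_subtype, Finset.mem_subtype] at hyD
        exact ⟨y.1.1, hyD, hyadj⟩
    · intro z hzD
      by_cases hzv : z = v
      · have hwD : w ∈ D := hvwD.resolve_left (fun h => hzD (hzv ▸ h))
        exact ⟨w, hwD, by rw [hzv]; exact (hAdjw v).mpr rfl⟩
      by_cases hzw : z = w
      · have hvD : v ∈ D := hvwD.resolve_right (fun h => hzD (hzw ▸ h))
        exact ⟨v, hvD, by rw [hzw]; exact (hAdjv w).mpr (Or.inr rfl)⟩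
      · have hz' : (⟨z, hzv, hzw⟩ : {z : V // z ≠ v ∧ z ≠ w}) ∉
            D.subtype (fun z => z ≠ v ∧ z ≠ w) := by
          rw [Finset.mem_subtype]; exact hzD
        obtain ⟨y, hyD, hyadj⟩ := hB _ hz'
        rw [Finset.mem_subtype] at hyD
        exact ⟨y.1, hyD, hyadj⟩
end
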